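/- Key step of the uniqueness argument: Let A, B be nonnegative quadratic forms on a common domain W such that for all f ∈ W with A(f) > 0, the ratio B(f)/A(f) lies in [c, C] for fixed constants 0 < c ≤ C < ∞. Set λ = inf(B|A). Suppose that for every δ > 0, the form C_δ := (1+δ)B − λA also satisfies the uniform ratio bound: sup(C_δ|A)/inf(C_δ|A) ≤ e^{K} for a constant K independent of δ. Then sup(B|A) = inf(B|A), i.e. B = λA on W. -/

import Mathlib

/-- The set of ratios `B(f,f)/A(f,f)` over `f` with `A(f,f) > 0`. -/
def ratioSet {W : Type*} (A B : W → ℝ) : Set ℝ :=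
  {r | ∃ f, 0 < A f ∧ r = B f / A f}

/-- key step of the uniqueness argument: if the ratios `B/A` lie in
`[c, C]`, `λ = inf(B|A)`, and for every `δ > 0` the form `C_δ = (1+δ)B − λA`
satisfies the uniform projective bound `sup(C_δ|A)/inf(C_δ|A) ≤ e^K` with `K`
independent of `δ`, then `sup(B|A) = inf(B|A)`, i.e. `B = λA` on `W`. -/
theorem stmt9 {W : Type*} [AddCommGroup W] [Module ℝ W]
    (A B : W → ℝ)
    (hA0 : ∀ f, 0 ≤ A f) (hB0 : ∀ f, 0 ≤ B f)
    (hzero : ∀ f, A f = 0 → B f = 0)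
    (hne : ∃ f, 0 < A f)
    (c C : ℝ) (hc : 0 < c) (hcC : c ≤ C)
    (hbound : ∀ f, 0 < A f → c ≤ B f / A f ∧ B f / A f ≤ C)
    (K : ℝ)
    (hK : ∀ δ : ℝ, 0 < δ →
      sSup (ratioSet A fun f => (1 + δ) * B f - sInf (ratioSet A B) * A f) /
        sInf (ratioSet A fun f => (1 + δ) * B f - sInf (ratioSet A B) * A f) ≤
          Real.exp K) :
    sSup (ratioSet A B) = sInf (ratioSet A B) ∧
      ∀ f, B f = sInf (ratioSet A B) * A f := by
  set S : Set ℝ := ratioSet A B with hS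
  obtain ⟨f₀, hf₀⟩ := hne
  have hSne : S.Nonempty := ⟨B f₀ / A f₀, f₀, hf₀, rfl⟩
  have hub : ∀ r ∈ S, r ≤ C := by
    rintro r ⟨f, hf, rfl⟩; exact (hbound f hf).2
  have hlb : ∀ r ∈ S, c ≤ r := by
    rintro r ⟨f, hf, rfl⟩; exact (hbound f hf).1
  have hbdda : BddAbove S := ⟨C, hub⟩
  have hbddb : BddBelow S := ⟨c, hlb⟩
  set lam : ℝ := sInf S with hlam
  set M : ℝ := sSup S with hM
  have hclam : c ≤ lam := le_csInf hSne hlb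
  have hlampos : 0 < lam := lt_of_lt_of_le hc hclam
  have hlamM : lam ≤ M := csInf_le_csSup hSne hbddb hbdda
  -- key inequality
  have key : ∀ δ : ℝ, 0 < δ → M - lam ≤ δ * (lam * Real.exp K - M) := by
    intro δ hδ
    have h1δ : (0:ℝ) < 1 + δ := by linarith
    set g : ℝ → ℝ := fun r => (1 + δ) * r - lam with hg
    have hgmono : Monotone g := by
      intro x y hxy
      simp only [hg]
      nlinarith
    have hgcont : Continuous g := by continuity
    have himg : (ratioSet A fun f => (1 + δ) * B f - lam * A f) = g '' S := by
      ext r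
      constructor
      · rintro ⟨f, hf, rfl⟩
        refine ⟨B f / A f, ⟨f, hf, rfl⟩, ?_⟩
        simp only [hg]
        field_simp
      · rintro ⟨s, ⟨f, hf, rfl⟩, rfl⟩
        refine ⟨f, hf, ?_⟩
        simp only [hg]
        field_simp
    have hsup : sSup (ratioSet A fun f => (1 + δ) * B f - lam * A f) = g M := by
      rw [himg, ← hgmono.map_csSup_of_continuousAt hgcont.continuousAt hSne hbdda]
    have hinf : sInf (ratioSet A fun f => (1 + δ) * B f - lam * A f) = g lam := by
      rw [himg, ← hgmono.map_csInf_of_continuousAt hgcont.continuousAt hSne hbddb]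
    have hKδ := hK δ hδ
    rw [hsup, hinf] at hKδ
    have hglam : g lam = δ * lam := by simp [hg]; ring
    rw [hglam] at hKδ
    have hδlam : 0 < δ * lam := mul_pos hδ hlampos
    rw [div_le_iff₀ hδlam] at hKδ
    simp only [hg] at hKδ
    nlinarith
  -- conclude M = lam
  have hMlam : M ≤ lam := by
    by_contra h
    push_neg at h
    have hE : 0 < lam * Real.exp K - M := by
      have := key 1 one_pos
      nlinarith
    have hδ : 0 < (M - lam) / (2 * (lam * Real.exp K - M)) :=
      div_pos (by linarith) (by linarith)
    have := key _ hδ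
    have h2 : (M - lam) / (2 * (lam * Real.exp K - M)) * (lam * Real.exp K - M)
        = (M - lam) / 2 := by
      field_simp
    rw [h2] at this
    linarith
  have hMeq : M = lam := le_antisymm hMlam hlamM
  refine ⟨hMeq, ?_⟩
  intro f
  by_cases hAf : A f = 0
  · rw [hAf, hzero f hAf]; ring
  · have hAfpos : 0 < A f := lt_of_le_of_ne (hA0 f) (Ne.symm hAf)
    have hmem : B f / A f ∈ S := ⟨f, hAfpos, rfl⟩
    have h1 : lam ≤ B f / A f := csInf_le hbddb hmem
    have h2 : B f / A f ≤ M := le_csSup hbdda hmem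
    have : B f / A f = lam := le_antisymm (hMeq ▸ h2) h1
    field_simp at this
    linarith [this]
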